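/- Let h, n′₁,…,n′ₛ be positive integers. Then there exist positive integers n₁,…,nₛ such that the following holds. For each i let Tᵢ be the complete nᵢ-ary tree of height h. Suppose T₁×⋯×Tₛ is coloured (with arbitrarily many colours) so that within every copy of every Tᵢ, no two siblings receive the same colour. Then for each i there is a complete n′ᵢ-ary subtree T′ᵢ of Tᵢ of height h such that within every copy of every T′ᵢ inside T′₁×⋯×T′ₛ, no vertex receives the same colour as any of its ancestors. -/

import Mathlib

/-- The vertex set of the complete `n`-ary tree of height `h`:
finite sequences over `Fin n` of length at most `h`. The empty sequence is the root. -/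
def TreeVert (n h : ℕ) : Type := {l : List (Fin n) // l.length ≤ h}

/-- Two vertices are siblings if they are distinct, have the same positive length,
and agree in all entries except the last. -/
def Siblings {n h : ℕ} (u v : TreeVert n h) : Prop :=
  u ≠ v ∧ ∃ (p : List (Fin n)) (x y : Fin n), u.val = p ++ [x] ∧ v.val = p ++ [y]

/-- `u` is a (proper) ancestor of `v` if `u` is a proper prefix of `v`. -/
def IsAncestor {n h : ℕ} (u v : TreeVert n h) : Prop :=
  u.val <+: v.val ∧ u ≠ v

/-- An embedding of the complete `n'`-ary tree of height `h` into the complete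
`n`-ary tree of height `h` as a complete `n'`-ary subtree: an injection sending
the root to the root and the children of each vertex `u` to children of `ψ u`. -/
def IsSubtreeEmbedding {n n' h : ℕ} (ψ : TreeVert n' h → TreeVert n h) : Prop :=
  Function.Injective ψ ∧
  (∀ u : TreeVert n' h, u.val = [] → (ψ u).val = []) ∧
  (∀ (u : List (Fin n')) (hu : u.length < h) (x : Fin n'),
    ∃ y : Fin n,
      (ψ ⟨u ++ [x], by simpa using hu⟩).val = (ψ ⟨u, hu.le⟩).val ++ [y])

noncomputable instance TreeVert.instFintype (n h : ℕ) : Fintype (TreeVert n h) :=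
  Fintype.ofInjective (fun l : TreeVert n h => (fun k : Fin h => l.val[k.val]?)) (by
    intro l₁ l₂ hl
    apply Subtype.ext
    apply List.ext_getElem?
    intro m
    by_cases hm : m < h
    · exact congrFun hl ⟨m, hm⟩
    · rw [List.getElem?_eq_none (le_trans l₁.2 (not_lt.1 hm)),
        List.getElem?_eq_none (le_trans l₂.2 (not_lt.1 hm))])

namespace TreeProof

variable {n n' h : ℕ}

def buildRev (g : List (Fin n) → Fin n' → Fin n) : List (Fin n') → List (Fin n)
  | [] => []
  | x :: t => g ((buildRev g t).reverse) x :: buildRev g t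

def build (g : List (Fin n) → Fin n' → Fin n) (l : List (Fin n')) : List (Fin n) :=
  (buildRev g l.reverse).reverse

@[simp] lemma buildRev_length (g : List (Fin n) → Fin n' → Fin n) (l : List (Fin n')) :
    (buildRev g l).length = l.length := by
  induction l with
  | nil => rfl
  | cons x t ih => simp [buildRev, ih]

@[simp] lemma build_length (g : List (Fin n) → Fin n' → Fin n) (l : List (Fin n')) :
    (build g l).length = l.length := by
  simp [build]

@[simp] lemma build_nil (g : List (Fin n) → Fin n' → Fin n) : build g [] = [] := rfl

lemma build_append (g : List (Fin n) → Fin n' → Fin n) (l : List (Fin n')) (x : Fin n') :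
    build g (l ++ [x]) = build g l ++ [g (build g l) x] := by
  simp [build, buildRev]

lemma build_prefix (g : List (Fin n) → Fin n' → Fin n) {l₁ l₂ : List (Fin n')}
    (hp : l₁ <+: l₂) : build g l₁ <+: build g l₂ := by
  obtain ⟨t, rfl⟩ := hp
  induction t using List.reverseRecOn with
  | nil => simp
  | append_singleton t x ih =>
      rw [← List.append_assoc, build_append]
      exact ih.trans (List.prefix_append _ _)

lemma build_injective (g : List (Fin n) → Fin n' → Fin n)
    (hg : ∀ p, Function.Injective (g p)) : Function.Injective (build g) := by
  intro l₁ l₂ he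
  induction l₁ using List.reverseRecOn generalizing l₂ with
  | nil =>
    cases l₂ using List.reverseRecOn with
    | nil => rfl
    | append_singleton t y => simp [build_append] at he
  | append_singleton t x ih =>
    cases l₂ using List.reverseRecOn with
    | nil => simp [build_append] at he
    | append_singleton t' y =>
      rw [build_append, build_append] at he
      obtain ⟨h2, h3⟩ := List.append_inj' he rfl
      obtain rfl := ih h2
      simp only [List.cons.injEq, and_true] at h3
      rw [hg _ h3]



section Core
variable {α κ : Type} [Fintype α]

noncomputable def badSet (χ : TreeVert n h → α → κ) (p : List (Fin n)) : Finset (Fin n) :=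
  @Finset.filter _
    (fun y => ∃ (a : α) (q : TreeVert n h), q.val <+: p ∧
      χ ⟨(p ++ [y]).take h, List.length_take_le _ _⟩ a = χ q a)
    (Classical.decPred _) Finset.univ

lemma mem_badSet {χ : TreeVert n h → α → κ} {p : List (Fin n)} {y : Fin n} :
    y ∈ badSet χ p ↔ ∃ (a : α) (q : TreeVert n h), q.val <+: p ∧
      χ ⟨(p ++ [y]).take h, List.length_take_le _ _⟩ a = χ q a := by
  simp [badSet]

lemma card_badSet_le (χ : TreeVert n h → α → κ)
    (hsib : ∀ (a : α) (u u' : TreeVert n h), Siblings u u' → χ u a ≠ χ u' a)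
    (p : List (Fin n)) (hp : p.length < h) :
    (badSet χ p).card ≤ h * Fintype.card α := by
  classical
  have hplen : (p ++ [·] : Fin n → List (Fin n)) = fun y => p ++ [y] := rfl
  have htake : ∀ y : Fin n, (p ++ [y]).take h = p ++ [y] := fun y =>
    List.take_of_length_le (by simp; omega)
  set I : Finset (List (Fin n)) := p.inits.toFinset with hI
  have hsub : badSet χ p ⊆ (Finset.univ (α := α) ×ˢ I).biUnion
      (fun aq => Finset.univ.filter (fun y =>
        χ ⟨(p ++ [y]).take h, List.length_take_le _ _⟩ aq.1
          = χ ⟨aq.2.take h, List.length_take_le _ _⟩ aq.1)) := by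
    intro y hy
    obtain ⟨a, q, hpre, heq⟩ := mem_badSet.1 hy
    rw [Finset.mem_biUnion]
    refine ⟨(a, q.val), ?_, ?_⟩
    · rw [Finset.mem_product]
      exact ⟨Finset.mem_univ _, List.mem_toFinset.2 ((List.mem_inits _ _).2 hpre)⟩
    · rw [Finset.mem_filter]
      refine ⟨Finset.mem_univ _, ?_⟩
      have : (⟨q.val.take h, List.length_take_le _ _⟩ : TreeVert n h) = q :=
        Subtype.ext (List.take_of_length_le q.2)
      rw [this]; exact heq
  have hone : ∀ aq : α × List (Fin n),
      (Finset.univ.filter (fun y =>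
        χ ⟨(p ++ [y]).take h, List.length_take_le _ _⟩ aq.1
          = χ ⟨aq.2.take h, List.length_take_le _ _⟩ aq.1)).card ≤ 1 := by
    intro aq
    rw [Finset.card_le_one]
    intro y hy y' hy'
    rw [Finset.mem_filter] at hy hy'
    by_contra hne
    have hs : Siblings (⟨(p ++ [y]).take h, List.length_take_le _ _⟩ : TreeVert n h)
        ⟨(p ++ [y']).take h, List.length_take_le _ _⟩ := by
      constructor
      · intro hc
        apply hne
        have h0 := congrArg Subtype.val hc
        have hlist : p ++ [y] = p ++ [y'] := by
          rw [← htake y, ← htake y']; exact h0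
        simpa using (List.append_inj' hlist rfl).2
      · exact ⟨p, y, y', by simp [htake], by simp [htake]⟩
    exact hsib aq.1 _ _ hs (hy.2.trans hy'.2.symm)
  calc (badSet χ p).card
      ≤ _ := Finset.card_le_card hsub
    _ ≤ ∑ aq ∈ Finset.univ (α := α) ×ˢ I, _ := Finset.card_biUnion_le
    _ ≤ ∑ _aq ∈ Finset.univ (α := α) ×ˢ I, 1 := Finset.sum_le_sum (fun aq _ => hone aq)
    _ = (Finset.univ (α := α) ×ˢ I).card := by simp
    _ = Fintype.card α * I.card := by simp [Finset.card_product]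
    _ ≤ Fintype.card α * h := by
        refine Nat.mul_le_mul_left _ ?_
        calc I.card ≤ p.inits.length := List.toFinset_card_le _
          _ = p.length + 1 := List.length_inits _
          _ ≤ h := hp
    _ = h * Fintype.card α := Nat.mul_comm _ _

noncomputable def pick (χ : TreeVert n h → α → κ)
    (hsib : ∀ (a : α) (u u' : TreeVert n h), Siblings u u' → χ u a ≠ χ u' a)
    (hn : n' + h * Fintype.card α ≤ n) (p : List (Fin n)) : Fin n' → Fin n :=
  if hp : p.length < h then
    (Finset.univ \ badSet χ p).orderEmbOfCardLe (by
      have h1 := card_badSet_le χ hsib p hp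
      have h2 : (Finset.univ \ badSet χ p).card
          = (Finset.univ : Finset (Fin n)).card - (badSet χ p).card :=
        by rw [Finset.card_sdiff, Finset.inter_univ]
      have h3 : (Finset.univ : Finset (Fin n)).card = n :=
        Finset.card_univ.trans (Fintype.card_fin n)
      omega)
  else Fin.castLE (le_trans (Nat.le_add_right _ _) hn)

lemma pick_injective (χ : TreeVert n h → α → κ) (hsib) (hn : n' + h * Fintype.card α ≤ n)
    (p : List (Fin n)) : Function.Injective (pick χ hsib hn p) := by
  unfold pick
  split
  · exact (Finset.orderEmbOfCardLe _ _).injective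
  · exact Fin.castLE_injective _

lemma pick_not_bad (χ : TreeVert n h → α → κ) (hsib) (hn : n' + h * Fintype.card α ≤ n)
    (p : List (Fin n)) (hp : p.length < h) (x : Fin n') :
    pick χ hsib hn p x ∉ badSet χ p := by
  unfold pick
  rw [dif_pos hp]
  exact (Finset.mem_sdiff.1 (Finset.orderEmbOfCardLe_mem _ _ x)).2


lemma core (χ : TreeVert n h → α → κ)
    (hsib : ∀ (a : α) (u u' : TreeVert n h), Siblings u u' → χ u a ≠ χ u' a)
    (hn : n' + h * Fintype.card α ≤ n) :
    ∃ ψ : TreeVert n' h → TreeVert n h, IsSubtreeEmbedding ψ ∧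
      ∀ (a : α) (u u' : TreeVert n' h), IsAncestor u u' → χ (ψ u) a ≠ χ (ψ u') a := by
  classical
  set g := pick χ hsib hn with hg
  refine ⟨fun u => ⟨build g u.val, by rw [build_length]; exact u.2⟩, ⟨?_, ?_, ?_⟩, ?_⟩
  · intro u u' he
    exact Subtype.ext (build_injective g (pick_injective χ hsib hn) (congrArg Subtype.val he))
  · intro u hu; simp [hu]
  · intro u hu x
    exact ⟨g (build g u) x, build_append g u x⟩
  · rintro a u u' ⟨hpre, hne⟩
    have hvne : u.val ≠ u'.val := fun hc => hne (Subtype.ext hc)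
    have hlen : u.val.length < u'.val.length := by
      rcases Nat.lt_or_ge u.val.length u'.val.length with h1 | h1
      · exact h1
      · exact absurd (List.IsPrefix.eq_of_length hpre (le_antisymm hpre.length_le h1)) hvne
    have hne' : u'.val ≠ [] := by
      intro hc; rw [hc] at hlen; simp at hlen
    set w := u'.val.dropLast with hw
    set x := u'.val.getLast hne' with hx
    have hdecomp : w ++ [x] = u'.val := List.dropLast_append_getLast hne'
    have hlw : w.length + 1 = u'.val.length := by rw [← hdecomp]; simp
    have hwlen : w.length < h := by have := u'.2; omega
    have huw : u.val <+: w :=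
      List.prefix_of_prefix_length_le hpre ⟨[x], hdecomp⟩ (by omega)
    have hplen : (build g w).length < h := by rw [build_length]; exact hwlen
    have hnotbad := pick_not_bad χ hsib hn (build g w) hplen x
    rw [mem_badSet] at hnotbad
    push_neg at hnotbad
    have hq := hnotbad a ⟨build g u.val, by rw [build_length]; exact u.2⟩ (build_prefix g huw)
    have hval : build g u'.val = build g w ++ [g (build g w) x] := by
      conv_lhs => rw [← hdecomp]
      rw [build_append]
    have htk : (build g w ++ [g (build g w) x]).take h = build g w ++ [g (build g w) x] :=
      List.take_of_length_le (by simp; omega)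
    refine fun hcontra => hq ?_
    have he2 : (⟨(build g w ++ [g (build g w) x]).take h, List.length_take_le _ _⟩ : TreeVert n h)
        = ⟨build g u'.val, by rw [build_length]; exact u'.2⟩ := Subtype.ext (by
          show (build g w ++ [g (build g w) x]).take h = build g u'.val
          rw [htk, hval])
    rw [he2]
    exact hcontra.symm


end Core

theorem aux (s : ℕ) (h : ℕ) : ∀ (n' : Fin s → ℕ), (∀ i, 0 < n' i) →
    ∀ (P : Type) [Fintype P],
    ∃ n : Fin s → ℕ, (∀ i, 0 < n i) ∧
      ∀ (κ : Type) (χ : P → ((i : Fin s) → TreeVert (n i) h) → κ),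
        (∀ (p : P) (v : (i : Fin s) → TreeVert (n i) h) (i : Fin s)
            (u u' : TreeVert (n i) h), Siblings u u' →
              χ p (Function.update v i u) ≠ χ p (Function.update v i u')) →
        ∃ ψ : (i : Fin s) → TreeVert (n' i) h → TreeVert (n i) h,
          (∀ i, IsSubtreeEmbedding (ψ i)) ∧
          ∀ (p : P) (v : (i : Fin s) → TreeVert (n' i) h) (i : Fin s)
              (u u' : TreeVert (n' i) h), IsAncestor u u' →
            χ p (Function.update (fun j => ψ j (v j)) i (ψ i u)) ≠
              χ p (Function.update (fun j => ψ j (v j)) i (ψ i u')) := by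
  induction s with
  | zero =>
    intro n' hn' P _
    exact ⟨fun i => i.elim0, fun i => i.elim0, fun κ χ hsib =>
      ⟨fun i => i.elim0, fun i => i.elim0, fun p v i => i.elim0⟩⟩
  | succ s ih =>
    intro n' hn' P instP
    set β := P × ((j : Fin s) → TreeVert (n' j.succ) h) with hβ
    set n0 := n' 0 + h * Fintype.card β with hn0
    obtain ⟨nt, hntpos, Htail⟩ := ih (fun j => n' j.succ) (fun j => hn' j.succ)
      (P × TreeVert n0 h)
    refine ⟨Fin.cons n0 nt, ?_, ?_⟩
    · intro i
      refine Fin.cases ?_ ?_ i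
      · show 0 < n0
        have := hn' 0
        omega
      · exact hntpos
    intro κ χ hsib
    set χ' : (P × TreeVert n0 h) → ((j : Fin s) → TreeVert (nt j) h) → κ :=
      fun pu W => χ pu.1 (Fin.cons (α := fun i => TreeVert ((Fin.cons n0 nt : Fin (s + 1) → ℕ) i) h) pu.2 W)
      with hχ'
    have hsib' : ∀ (pu : P × TreeVert n0 h) (W : (j : Fin s) → TreeVert (nt j) h)
        (j : Fin s) (u u' : TreeVert (nt j) h), Siblings u u' →
          χ' pu (Function.update W j u) ≠ χ' pu (Function.update W j u') := by
      intro pu W j u u' hs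
      show χ pu.1 (Fin.cons (α := fun i => TreeVert ((Fin.cons n0 nt : Fin (s + 1) → ℕ) i) h) pu.2 (Function.update W j u))
        ≠ χ pu.1 (Fin.cons (α := fun i => TreeVert ((Fin.cons n0 nt : Fin (s + 1) → ℕ) i) h) pu.2 (Function.update W j u'))
      erw [Fin.cons_update, Fin.cons_update]
      exact hsib pu.1 (Fin.cons (α := fun i => TreeVert ((Fin.cons n0 nt : Fin (s + 1) → ℕ) i) h) pu.2 W) j.succ u u' hs
    obtain ⟨ψt, hψtemb, Ht⟩ := Htail κ χ' hsib'
    set χ0 : TreeVert n0 h → β → κ :=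
      fun u0 pw => χ pw.1 (Fin.cons (α := fun i => TreeVert ((Fin.cons n0 nt : Fin (s + 1) → ℕ) i) h) u0
        (fun j => ψt j (pw.2 j))) with hχ0
    have hsib0 : ∀ (a : β) (u u' : TreeVert n0 h), Siblings u u' → χ0 u a ≠ χ0 u' a := by
      intro a u u' hs
      show χ a.1 (Fin.cons (α := fun i => TreeVert ((Fin.cons n0 nt : Fin (s + 1) → ℕ) i) h) u (fun j => ψt j (a.2 j)))
        ≠ χ a.1 (Fin.cons (α := fun i => TreeVert ((Fin.cons n0 nt : Fin (s + 1) → ℕ) i) h) u' (fun j => ψt j (a.2 j)))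
      rw [← Fin.update_cons_zero (α := fun i => TreeVert ((Fin.cons n0 nt : Fin (s + 1) → ℕ) i) h) u
            (fun j => ψt j (a.2 j)) u,
          ← Fin.update_cons_zero (α := fun i => TreeVert ((Fin.cons n0 nt : Fin (s + 1) → ℕ) i) h) u
            (fun j => ψt j (a.2 j)) u']
      exact hsib a.1 (Fin.cons (α := fun i => TreeVert ((Fin.cons n0 nt : Fin (s + 1) → ℕ) i) h) u
        (fun j => ψt j (a.2 j))) 0 u u' hs
    obtain ⟨ψ0, hψ0emb, H0⟩ := core (n' := n' 0) χ0 hsib0 (le_of_eq hn0.symm)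
    refine ⟨Fin.cons (α := fun i => TreeVert (n' i) h → TreeVert ((Fin.cons n0 nt : Fin (s + 1) → ℕ) i) h) ψ0 ψt,
      ?_, ?_⟩
    · intro i
      refine Fin.cases ?_ ?_ i
      · exact hψ0emb
      · intro j; exact hψtemb j
    · intro p v i
      have hV : (fun j => Fin.cons (α := fun i => TreeVert (n' i) h → TreeVert ((Fin.cons n0 nt : Fin (s + 1) → ℕ) i) h) ψ0 ψt j (v j))
          = Fin.cons (α := fun i => TreeVert ((Fin.cons n0 nt : Fin (s + 1) → ℕ) i) h) (ψ0 (v 0))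
              (fun j => ψt j (v j.succ)) := by
        funext i'
        refine Fin.cases ?_ ?_ i' <;> intros <;> rfl
      induction i using Fin.cases with
      | zero =>
        intro u u' hA
        rw [hV]
        erw [Fin.update_cons_zero, Fin.update_cons_zero]
        exact H0 (p, fun j => v j.succ) u u' hA
      | succ j =>
        intro u u' hA
        rw [hV]
        erw [← Fin.cons_update, ← Fin.cons_update]
        exact Ht (p, ψ0 (v 0)) (fun j' => v j'.succ) j u u' hA

end TreeProof

/-- **Lemma 3.** Given `h` and target arities `n'₁, …, n'ₛ`, there are arities
`n₁, …, nₛ` so that: whenever the product `T₁ × ⋯ × Tₛ` of the complete `nᵢ`-ary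
trees of height `h` is coloured so that in every copy of every `Tᵢ` no two siblings
get the same colour, there are complete `n'ᵢ`-ary subtrees `T'ᵢ ⊆ Tᵢ` of height `h`
such that in every copy of every `T'ᵢ` inside `T'₁ × ⋯ × T'ₛ`, no vertex shares a
colour with any of its ancestors. -/
theorem exists_proper_subtrees (s h : ℕ) (hh : 0 < h)
    (n' : Fin s → ℕ) (hn' : ∀ i, 0 < n' i) :
    ∃ n : Fin s → ℕ, (∀ i, 0 < n i) ∧
      ∀ (κ : Type) (χ : ((i : Fin s) → TreeVert (n i) h) → κ),
        (∀ (v : (i : Fin s) → TreeVert (n i) h) (i : Fin s)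
            (u u' : TreeVert (n i) h), Siblings u u' →
              χ (Function.update v i u) ≠ χ (Function.update v i u')) →
        ∃ ψ : (i : Fin s) → TreeVert (n' i) h → TreeVert (n i) h,
          (∀ i, IsSubtreeEmbedding (ψ i)) ∧
          ∀ (v : (i : Fin s) → TreeVert (n' i) h) (i : Fin s)
              (u u' : TreeVert (n' i) h), IsAncestor u u' →
            χ (Function.update (fun j => ψ j (v j)) i (ψ i u)) ≠
              χ (Function.update (fun j => ψ j (v j)) i (ψ i u')) := by
  obtain ⟨n, hpos, H⟩ := TreeProof.aux s h n' hn' PUnit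
  refine ⟨n, hpos, ?_⟩
  intro κ χ hsib
  obtain ⟨ψ, hemb, Hf⟩ := H κ (fun _ v => χ v) (fun p v i u u' hs => hsib v i u u' hs)
  exact ⟨ψ, hemb, fun v i u u' hA => Hf PUnit.unit v i u u' hA⟩
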